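/- Coercivity transfer from TGV² to DTGV²: let H : L²(Ω) → 𝒫¹(Ω) be a continuous linear projection onto the space 𝒫¹(Ω) of affine functions on Ω, and suppose there exists C > 0 such that ‖u‖_{L²(Ω)} ≤ C · TGV²_λ(u) for all u ∈ ker H. Then for all u ∈ ker H, ‖u‖_{L²(Ω)} ≤ (C · max(λ₀,λ₁) / (a² · min(λ₀,λ₁))) · DTGV²_λ(u). -/

import Mathlib

open MeasureTheory Filter
open scoped ENNReal Topology Pointwise

noncomputable section

abbrev E2 := EuclideanSpace ℝ (Fin 2)

/-- Build a vector of `ℝ²` from its coordinates. -/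
def vec2 (x y : ℝ) : E2 := (WithLp.equiv 2 (Fin 2 → ℝ)).symm ![x, y]

/-- The elliptical set `E^{a,θ}`. -/
def Ellip (a θ : ℝ) : Set E2 :=
  {x : E2 | (x 0 * Real.cos θ + x 1 * Real.sin θ) ^ 2 +
      ((-(x 0) * Real.sin θ + x 1 * Real.cos θ) / a) ^ 2 ≤ 1}

/-- Partial derivative in the `i`-th coordinate direction. -/
def pd (i : Fin 2) (f : E2 → ℝ) (x : E2) : ℝ :=
  fderiv ℝ f x (EuclideanSpace.single i 1)

/-- Divergence of a vector field on `ℝ²`. -/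
def divVec (v : E2 → E2) (x : E2) : ℝ :=
  pd 0 (fun y => v y 0) x + pd 1 (fun y => v y 1) x

/-- `C¹` vector fields compactly supported in `Ω`. -/
def Cc1 (Ω : Set E2) (v : E2 → E2) : Prop :=
  ContDiff ℝ 1 v ∧ HasCompactSupport v ∧ tsupport v ⊆ Ω

/-- The directional total variation `DTV^{a,θ}`. -/
def DTV (Ω : Set E2) (a θ : ℝ) (u : E2 → ℝ) : ℝ≥0∞ :=
  ⨆ v ∈ {v : E2 → E2 | Cc1 Ω v ∧ ∀ x ∈ Ω, v x ∈ Ellip a θ},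
    ENNReal.ofReal (∫ x in Ω, u x * divVec v x)

/-- The total variation. -/
def TV (Ω : Set E2) (u : E2 → ℝ) : ℝ≥0∞ :=
  ⨆ v ∈ {v : E2 → E2 | Cc1 Ω v ∧ ∀ x ∈ Ω, ‖v x‖ ≤ 1},
    ENNReal.ofReal (∫ x in Ω, u x * divVec v x)

abbrev Mat2 := Matrix (Fin 2) (Fin 2) ℝ

/-- The rotation matrix `R_θ`. -/
def Rmat (θ : ℝ) : Mat2 := !![Real.cos θ, -Real.sin θ; Real.sin θ, Real.cos θ]

/-- The matrix `Λ_a = diag(1,a)`. -/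
def Lmat (a : ℝ) : Mat2 := !![1, 0; 0, a]

/-- Symmetric `2×2` matrices whose rows and columns lie in `S ⊆ ℝ²`. -/
def rowcol (S : Set E2) : Set Mat2 :=
  {V : Mat2 | V.IsSymm ∧ (∀ i : Fin 2, vec2 (V i 0) (V i 1) ∈ S) ∧
    ∀ j : Fin 2, vec2 (V 0 j) (V 1 j) ∈ S}

/-- `E^{a,θ}_{2×2}`. -/
def EllipM (a θ : ℝ) : Set Mat2 := rowcol (Ellip a θ)

/-- `B_{2×2}`. -/
def BallM : Set Mat2 := rowcol (Metric.closedBall 0 1)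

/-- Divergence of a (symmetric) matrix field. -/
def divMat (W : E2 → Mat2) (x : E2) : E2 :=
  vec2 (pd 0 (fun y => W y 0 0) x + pd 1 (fun y => W y 0 1) x)
    (pd 0 (fun y => W y 1 0) x + pd 1 (fun y => W y 1 1) x)

/-- Second-order divergence of a matrix field. -/
def div2Mat (W : E2 → Mat2) (x : E2) : ℝ :=
  pd 0 (pd 0 (fun y => W y 0 0)) x + pd 1 (pd 1 (fun y => W y 1 1)) x +
    2 * pd 0 (pd 1 (fun y => W y 0 1)) x

/-- `C²` symmetric-matrix fields compactly supported in `Ω`. -/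
def Cc2Sym (Ω : Set E2) (W : E2 → Mat2) : Prop :=
  (∀ i j : Fin 2, ContDiff ℝ 2 (fun x => W x i j)) ∧ HasCompactSupport W ∧
    tsupport W ⊆ Ω ∧ ∀ x, (W x).IsSymm

/-- The second-order directional total generalized variation `DTGV²_λ`. -/
def DTGV2 (Ω : Set E2) (a θ l0 l1 : ℝ) (u : E2 → ℝ) : ℝ≥0∞ :=
  ⨆ W ∈ {W : E2 → Mat2 | Cc2Sym Ω W ∧ (∀ x ∈ Ω, W x ∈ l0 • EllipM a θ) ∧
      ∀ x ∈ Ω, divMat W x ∈ l1 • Ellip a θ},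
    ENNReal.ofReal (∫ x in Ω, u x * div2Mat W x)

/-- The second-order total generalized variation `TGV²_λ`. -/
def TGV2 (Ω : Set E2) (l0 l1 : ℝ) (u : E2 → ℝ) : ℝ≥0∞ :=
  ⨆ W ∈ {W : E2 → Mat2 | Cc2Sym Ω W ∧ (∀ x ∈ Ω, W x ∈ l0 • BallM) ∧
      ∀ x ∈ Ω, divMat W x ∈ Metric.closedBall 0 l1},
    ENNReal.ofReal (∫ x in Ω, u x * div2Mat W x)

/-- `u` agrees a.e. on `Ω` with an affine function. -/
def IsAffineAE (Ω : Set E2) (u : E2 → ℝ) : Prop :=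
  ∃ c₀ c₁ c₂ : ℝ, ∀ᵐ x ∂(volume.restrict Ω), u x = c₀ + c₁ * x 0 + c₂ * x 1


section Aux

lemma vec2_smul (a x y : ℝ) : vec2 (a*x) (a*y) = a • vec2 x y := by
  ext i; fin_cases i <;> rfl

lemma smul_mem_Ellip {a : ℝ} (θ : ℝ) (ha : 0 < a) (ha1 : a ≤ 1) {v : E2} (hv : ‖v‖ ≤ 1) :
    a • v ∈ Ellip a θ := by
  have hS : (0:ℝ) ≤ ∑ i, ‖v i‖^2 := Finset.sum_nonneg (fun _ _ => sq_nonneg _)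
  have hnorm : ‖v‖^2 = ∑ i, ‖v i‖^2 := by rw [EuclideanSpace.norm_eq v, Real.sq_sqrt hS]
  have hsum : v 0 ^ 2 + v 1 ^ 2 ≤ 1 := by
    have h2 : ‖v‖^2 ≤ 1 := by nlinarith [norm_nonneg v]
    rw [hnorm, Fin.sum_univ_two, Real.norm_eq_abs, Real.norm_eq_abs, sq_abs, sq_abs] at h2
    exact h2
  have e0 : (a • v) 0 = a * v 0 := rfl
  have e1 : (a • v) 1 = a * v 1 := rfl
  simp only [Ellip, Set.mem_setOf_eq, e0, e1]
  have hdiv : (-(a * v 0) * Real.sin θ + a * v 1 * Real.cos θ) / a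
      = -(v 0) * Real.sin θ + v 1 * Real.cos θ := by field_simp
  rw [hdiv]
  have hsc := Real.sin_sq_add_cos_sq θ
  have hid : (v 0 * Real.cos θ + v 1 * Real.sin θ)^2 + (-(v 0) * Real.sin θ + v 1 * Real.cos θ)^2
      = v 0 ^ 2 + v 1 ^ 2 := by linear_combination (v 0 ^ 2 + v 1 ^ 2) * hsc
  have ha2 : a ^ 2 ≤ 1 := by nlinarith
  nlinarith [hid, hsum, ha2, sq_nonneg (v 0 * Real.cos θ + v 1 * Real.sin θ)]

lemma smul_mem_EllipM {a : ℝ} (θ : ℝ) (ha : 0 < a) (ha1 : a ≤ 1) {V : Mat2}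
    (hV : V ∈ BallM) : a • V ∈ EllipM a θ := by
  obtain ⟨hs, hr, hc⟩ := hV
  refine ⟨?_, fun i => ?_, fun j => ?_⟩
  · rw [Matrix.IsSymm, Matrix.transpose_smul, hs]
  · have e : vec2 ((a • V) i 0) ((a • V) i 1) = a • vec2 (V i 0) (V i 1) := vec2_smul ..
    rw [e]
    exact smul_mem_Ellip θ ha ha1 (mem_closedBall_zero_iff.mp (hr i))
  · have e : vec2 ((a • V) 0 j) ((a • V) 1 j) = a • vec2 (V 0 j) (V 1 j) := vec2_smul ..
    rw [e]
    exact smul_mem_Ellip θ ha ha1 (mem_closedBall_zero_iff.mp (hc j))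

lemma contDiff_pd {f : E2 → ℝ} (hf : ContDiff ℝ 2 f) (i : Fin 2) : ContDiff ℝ 1 (pd i f) :=
  (hf.fderiv_right (by norm_num)).clm_apply contDiff_const

lemma pd_const_mul (i : Fin 2) (c : ℝ) {f : E2 → ℝ} (hf : Differentiable ℝ f) :
    pd i (fun y => c * f y) = fun x => c * pd i f x := by
  funext x
  simp only [pd]
  rw [fderiv_const_mul (hf x)]
  rfl

end Aux

set_option maxHeartbeats 1000000 in
/-- coercivity transfer from `TGV²_λ` to `DTGV²_λ` on `ker H`. -/
theorem coercivity_transfer (Ω : Set E2) (hΩo : IsOpen Ω) (hΩc : IsConnected Ω)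
    (hΩb : Bornology.IsBounded Ω)
    (a θ l0 l1 C : ℝ) (ha : 0 < a) (ha1 : a ≤ 1) (hl0 : 0 < l0) (hl1 : 0 < l1)
    (hC : 0 < C)
    (H : Lp ℝ 2 (volume.restrict Ω) →L[ℝ] Lp ℝ 2 (volume.restrict Ω))
    (hHproj : ∀ u, H (H u) = H u)
    (hHrange : ∀ u, IsAffineAE Ω (H u))
    (hHfix : ∀ u : Lp ℝ 2 (volume.restrict Ω), IsAffineAE Ω u → H u = u)
    (hcoer : ∀ u : Lp ℝ 2 (volume.restrict Ω), H u = 0 →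
      ENNReal.ofReal ‖u‖ ≤ ENNReal.ofReal C * TGV2 Ω l0 l1 u) :
    ∀ u : Lp ℝ 2 (volume.restrict Ω), H u = 0 →
      ENNReal.ofReal ‖u‖ ≤
        ENNReal.ofReal (C * max l0 l1 / (a ^ 2 * min l0 l1)) * DTGV2 Ω a θ l0 l1 u := by
  intro u hu
  -- Key step: TGV2 ≤ a⁻¹ • DTGV2
  have hTle : TGV2 Ω l0 l1 (u : E2 → ℝ) ≤ ENNReal.ofReal a⁻¹ * DTGV2 Ω a θ l0 l1 (u : E2 → ℝ) := by
    rw [TGV2]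
    refine iSup₂_le fun W hW => ?_
    rw [Set.mem_setOf_eq] at hW
    obtain ⟨⟨hsm, hcs, hts, hsym⟩, hW0, hW1⟩ := hW
    set W' : E2 → Mat2 := fun x => a • W x with hW'def
    have hentry : ∀ i j : Fin 2, (fun x => W' x i j) = fun x => a * W x i j := fun i j => rfl
    have hd : ∀ i j : Fin 2, Differentiable ℝ (fun x => W x i j) :=
      fun i j => (hsm i j).differentiable (by norm_num)
    have hpd1 : ∀ (m : Fin 2) (i j : Fin 2),
        pd m (fun y => W' y i j) = fun x => a * pd m (fun y => W y i j) x := by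
      intro m i j
      rw [hentry i j]
      exact pd_const_mul m a (hd i j)
    have hpd2 : ∀ (k m : Fin 2) (i j : Fin 2) (x : E2),
        pd k (pd m (fun y => W' y i j)) x = a * pd k (pd m (fun y => W y i j)) x := by
      intro k m i j x
      rw [hpd1 m i j]
      have := pd_const_mul k a (f := pd m (fun y => W y i j))
        ((contDiff_pd (hsm i j) m).differentiable (by norm_num))
      exact congrFun this x
    have hdiv2 : ∀ x, div2Mat W' x = a * div2Mat W x := by
      intro x
      simp only [div2Mat, hpd2]
      ring
    have hdivm : ∀ x, divMat W' x = a • divMat W x := by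
      intro x
      simp only [divMat, hpd1]
      rw [← mul_add, ← mul_add, vec2_smul]
    -- W' is admissible for DTGV2
    have hmem : W' ∈ {W : E2 → Mat2 | Cc2Sym Ω W ∧ (∀ x ∈ Ω, W x ∈ l0 • EllipM a θ) ∧
        ∀ x ∈ Ω, divMat W x ∈ l1 • Ellip a θ} := by
      refine ⟨⟨fun i j => ?_, ?_, ?_, fun x => ?_⟩, fun x hx => ?_, fun x hx => ?_⟩
      · rw [hentry i j]; exact contDiff_const.mul (hsm i j)
      · refine hcs.mono ?_
        intro x hx
        simp only [Function.mem_support] at hx ⊢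
        intro h0
        exact hx (by simp [hW'def, h0])
      · refine le_trans (closure_mono ?_) hts
        intro x hx
        simp only [Function.mem_support] at hx ⊢
        intro h0
        exact hx (by simp [hW'def, h0])
      · rw [Matrix.IsSymm, show W' x = a • W x from rfl, Matrix.transpose_smul, hsym x]
      · obtain ⟨V, hV, hVe⟩ := hW0 x hx
        have : W' x = l0 • (a • V) := by
          rw [show W' x = a • W x from rfl, ← hVe, smul_comm]
        rw [this]
        exact Set.smul_mem_smul_set (smul_mem_EllipM θ ha ha1 hV)
      · have hb : ‖divMat W x‖ ≤ l1 := mem_closedBall_zero_iff.mp (hW1 x hx)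
        set y : E2 := l1⁻¹ • divMat W x with hy
        have hny : ‖y‖ ≤ 1 := by
          rw [hy, norm_smul, Real.norm_eq_abs, abs_of_pos (inv_pos.2 hl1)]
          calc l1⁻¹ * ‖divMat W x‖ ≤ l1⁻¹ * l1 := by
                exact mul_le_mul_of_nonneg_left hb (inv_pos.2 hl1).le
            _ = 1 := inv_mul_cancel₀ hl1.ne'
        have : divMat W' x = l1 • (a • y) := by
          rw [hdivm x, hy, smul_comm l1 a, smul_inv_smul₀ hl1.ne']
        rw [this]
        exact Set.smul_mem_smul_set (smul_mem_Ellip θ ha ha1 hny)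
    have hint : ∫ x in Ω, u x * div2Mat W' x = a * ∫ x in Ω, u x * div2Mat W x := by
      simp_rw [hdiv2, show ∀ (p q : ℝ), p * (a * q) = a * (p * q) from fun p q => by ring]
      exact MeasureTheory.integral_const_mul a _
    have heq : ∫ x in Ω, u x * div2Mat W x = a⁻¹ * ∫ x in Ω, u x * div2Mat W' x := by
      rw [hint]; field_simp
    rw [heq, ENNReal.ofReal_mul (by positivity)]
    refine mul_le_mul_right ?_ _
    rw [DTGV2]
    exact le_iSup₂ (f := fun (W : E2 → Mat2) (_ : W ∈ _) =>
      ENNReal.ofReal (∫ x in Ω, u x * div2Mat W x)) W' hmem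
  have hconst : C * a⁻¹ ≤ C * max l0 l1 / (a ^ 2 * min l0 l1) := by
    have hm : (0:ℝ) < min l0 l1 := lt_min hl0 hl1
    have hmM : min l0 l1 ≤ max l0 l1 := min_le_max
    rw [show C * a⁻¹ = C / a by rw [div_eq_mul_inv],
      div_le_div_iff₀ ha (by positivity)]
    nlinarith [mul_pos hC ha, mul_pos (mul_pos hC ha) hm]
  calc ENNReal.ofReal ‖u‖ ≤ ENNReal.ofReal C * TGV2 Ω l0 l1 u := hcoer u hu
    _ ≤ ENNReal.ofReal C * (ENNReal.ofReal a⁻¹ * DTGV2 Ω a θ l0 l1 u) :=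
        mul_le_mul_right hTle _
    _ = ENNReal.ofReal (C * a⁻¹) * DTGV2 Ω a θ l0 l1 u := by
        rw [ENNReal.ofReal_mul hC.le, mul_assoc]
    _ ≤ ENNReal.ofReal (C * max l0 l1 / (a ^ 2 * min l0 l1)) * DTGV2 Ω a θ l0 l1 u :=
        mul_le_mul_left (ENNReal.ofReal_le_ofReal hconst) _
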